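/- In the group algebra Q[S_{n+1}], for 0 <= k <= n the element x_{n-k} (sum of all w with w(1) < ... < w(n-k+1)) equals the falling factorial prod_{i=0}^{k-1} (x_{n-1} - i), where x_{n-1} is the sum of all w with w(1) < ... < w(n). -/

import Mathlib

/-- In the group algebra `ℚ[S_N]` (permutations of `{0, 1, ..., N-1}`, corresponding to
`{1, ..., N}` in one-based indexing), `xA N j` is the sum of all permutations `w` with
`w 0 < w 1 < ... < w j`, i.e. the minimal-length left coset representatives of the
parabolic subgroup generated by the adjacent transpositions `s_1, ..., s_j`. -/
noncomputable def xA (N j : ℕ) : MonoidAlgebra ℚ (Equiv.Perm (Fin N)) :=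
  ∑ w ∈ Finset.univ.filter
      (fun w : Equiv.Perm (Fin N) => ∀ a b : Fin N, a < b → (b : ℕ) ≤ j → w a < w b),
    MonoidAlgebra.single w 1


def cycFun (n : ℕ) (m : Fin (n+1)) (i : Fin (n+1)) : Fin (n+1) :=
  if h : (i : ℕ) = n then m
  else if (i : ℕ) < (m : ℕ) then i else ⟨(i : ℕ)+1, by have := i.isLt; omega⟩

def cycInvFun (n : ℕ) (m : Fin (n+1)) (i : Fin (n+1)) : Fin (n+1) :=
  if (i : ℕ) < (m : ℕ) then i
  else if h : (i : ℕ) = (m : ℕ) then ⟨n, Nat.lt_succ_self n⟩ else ⟨(i : ℕ)-1, by have := i.isLt; omega⟩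

lemma cycFun_coe (n : ℕ) (m : Fin (n+1)) (i : Fin (n+1)) :
    ((cycFun n m i : Fin (n+1)) : ℕ) =
      if (i : ℕ) = n then (m : ℕ) else if (i : ℕ) < (m : ℕ) then (i : ℕ) else (i : ℕ)+1 := by
  unfold cycFun; split_ifs <;> rfl

lemma cycInvFun_coe (n : ℕ) (m : Fin (n+1)) (i : Fin (n+1)) :
    ((cycInvFun n m i : Fin (n+1)) : ℕ) =
      if (i : ℕ) < (m : ℕ) then (i : ℕ) else if (i : ℕ) = (m : ℕ) then n else (i : ℕ)-1 := by
  unfold cycInvFun; split_ifs <;> rfl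

/-- The cycle `(m, m+1, ..., n)` in `S_{n+1}`. -/
def cyc (n : ℕ) (m : Fin (n+1)) : Equiv.Perm (Fin (n+1)) where
  toFun := cycFun n m
  invFun := cycInvFun n m
  left_inv := by
    intro i
    have hi := i.isLt; have hm := m.isLt
    apply Fin.ext
    rw [cycInvFun_coe, cycFun_coe]
    split_ifs <;> omega
  right_inv := by
    intro i
    have hi := i.isLt; have hm := m.isLt
    apply Fin.ext
    rw [cycFun_coe, cycInvFun_coe]
    split_ifs <;> omega

lemma cyc_apply (n : ℕ) (m : Fin (n+1)) (i : Fin (n+1)) :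
    ((cyc n m) i : ℕ) =
      if (i : ℕ) = n then (m : ℕ) else if (i : ℕ) < (m : ℕ) then (i : ℕ) else (i : ℕ)+1 :=
  cycFun_coe n m i

lemma cyc_inv_apply (n : ℕ) (m : Fin (n+1)) (i : Fin (n+1)) :
    (((cyc n m)⁻¹) i : ℕ) =
      if (i : ℕ) < (m : ℕ) then (i : ℕ) else if (i : ℕ) = (m : ℕ) then n else (i : ℕ)-1 :=
  cycInvFun_coe n m i

section
variable {N j : ℕ}

abbrev Acond (N j : ℕ) (w : Equiv.Perm (Fin N)) : Prop :=
  ∀ a b : Fin N, a < b → (b : ℕ) ≤ j → w a < w b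

-- lower bound: i ≤ w i for i ≤ j
lemma le_apply_of_cond (w : Equiv.Perm (Fin N)) (hw : Acond N j w) :
    ∀ t : ℕ, ∀ ht : t < N, t ≤ j → t ≤ (w ⟨t, ht⟩ : ℕ) := by
  intro t
  induction t with
  | zero => intro _ _; exact Nat.zero_le _
  | succ t IH =>
    intro ht h
    have h1 : (⟨t, by omega⟩ : Fin N) < ⟨t+1, ht⟩ := by simp [Fin.lt_def]
    have h2 := hw _ _ h1 h
    have h3 := IH (by omega) (by omega)
    rw [Fin.lt_def] at h2
    omega

lemma apply_le_of_cond (w : Equiv.Perm (Fin N)) (hw : Acond N j w) :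
    ∀ d t : ℕ, ∀ ht : t < N, t + d = j → j < N → (w ⟨t, ht⟩ : ℕ) ≤ t + (N - 1 - j) := by
  intro d
  induction d with
  | zero =>
    intro t ht h hj
    have := (w ⟨t, ht⟩).isLt
    omega
  | succ d IH =>
    intro t ht h hj
    have hlt : t + 1 < N := by omega
    have h1 : (⟨t, ht⟩ : Fin N) < ⟨t+1, hlt⟩ := by simp [Fin.lt_def]
    have h2 := hw _ _ h1 (show t+1 ≤ j by omega)
    have h3 := IH (t+1) hlt (by omega) hj
    rw [Fin.lt_def] at h2
    omega

end

section
variable {N j : ℕ}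

lemma le_apply' (w : Equiv.Perm (Fin N)) (hw : Acond N j w) (i : Fin N) (h : (i : ℕ) ≤ j) :
    (i : ℕ) ≤ (w i : ℕ) := by
  have := le_apply_of_cond w hw i i.isLt h
  simpa using this

lemma apply_le' (w : Equiv.Perm (Fin N)) (hw : Acond N j w) (i : Fin N) (h : (i : ℕ) ≤ j)
    (hj : j < N) : (w i : ℕ) ≤ (i : ℕ) + (N - 1 - j) := by
  have := apply_le_of_cond w hw (j - i) i i.isLt (by omega) hj
  simpa using this

end

lemma eq_cyc (n : ℕ) (hn : 1 ≤ n) (w : Equiv.Perm (Fin (n+1)))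
    (hw : Acond (n+1) (n-1) w) : w = cyc n (w (Fin.last n)) := by
  have hm : ((w (Fin.last n) : Fin (n+1)) : ℕ) = ((w (Fin.last n) : Fin (n+1)) : ℕ) := rfl
  set m : ℕ := ((w (Fin.last n) : Fin (n+1)) : ℕ) with hmdef
  have key : ∀ t : ℕ, ∀ i : Fin (n+1), (i : ℕ) = t → (i : ℕ) < n →
      (w i : ℕ) = if (i : ℕ) < m then (i : ℕ) else (i : ℕ) + 1 := by
    intro t
    induction t using Nat.strong_induction_on with
    | _ t IH =>
      intro i hit hin
      have hlow := le_apply' w hw i (by omega)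
      have hupp := apply_le' w hw i (by omega) (by omega)
      have hne : (w i : ℕ) ≠ m := by
        intro hEq
        have h1 : w i = w (Fin.last n) := Fin.ext hEq
        have h2 := w.injective h1
        have h3 : (i : ℕ) = n := by
          have := congrArg Fin.val h2
          simpa [Fin.last] using this
        omega
      by_cases hcm : (i : ℕ) < m
      · simp only [if_pos hcm]
        by_contra hne2
        have hval : (w i : ℕ) = (i : ℕ) + 1 := by omega
        have hq : (t : ℕ) < n + 1 := by omega
        set a : Fin (n+1) := w.symm ⟨t, hq⟩ with hadef
        have ha : w a = ⟨t, hq⟩ := w.apply_symm_apply _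
        have haval : (w a : ℕ) = t := by rw [ha]
        by_cases han : (a : ℕ) = n
        · -- a = last, so m = t, contradiction with t = i < m
          have : a = Fin.last n := Fin.ext han
          rw [this] at ha
          have : m = t := by rw [hmdef, ha]
          omega
        · have hlowa := le_apply' w hw a (by omega)
          -- a ≤ w a = t
          by_cases hat : (a : ℕ) = t
          · -- w i = t, contra hval
            have : a = i := Fin.ext (by omega)
            rw [this] at haval
            omega
          · have halt : (a : ℕ) < t := by omega
            have e1 := IH (a : ℕ) halt a rfl (by have := a.isLt; omega)
            rw [haval] at e1
            split_ifs at e1 <;> omega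
      · simp only [if_neg hcm]
        by_cases htm : (i : ℕ) = m
        · omega
        · -- i > m
          have hp : t - 1 < n + 1 := by omega
          have e1 := IH (t-1) (by omega) ⟨t-1, hp⟩ rfl (show t-1 < n by omega)
          have hvne : (w (⟨t-1, hp⟩ : Fin (n+1)) : ℕ) ≠ (w i : ℕ) := by
            intro hq2
            have := w.injective (Fin.ext hq2)
            have := congrArg Fin.val this
            simp only [] at this
            omega
          simp only [if_neg (by omega : ¬ (t-1 < m))] at e1
          omega
  apply Equiv.ext
  intro i
  apply Fin.ext
  rw [cyc_apply]
  by_cases hin : (i : ℕ) = n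
  · have : i = Fin.last n := Fin.ext hin
    rw [this]
    simp
  · rw [if_neg hin]
    exact key (i : ℕ) i rfl (by have := i.isLt; omega)

lemma cyc_last (n : ℕ) (m : Fin (n+1)) : cyc n m (Fin.last n) = m := by
  apply Fin.ext
  rw [cyc_apply]
  simp

lemma cyc_mem (n : ℕ) (hn : 1 ≤ n) (m : Fin (n+1)) : Acond (n+1) (n-1) (cyc n m) := by
  intro a b hab hb
  have hab' := Fin.lt_def.mp hab
  have ha := a.isLt; have hbb := b.isLt; have hmm := m.isLt
  rw [Fin.lt_def, cyc_apply, cyc_apply]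
  split_ifs <;> omega

lemma xA_nsub1 (n : ℕ) (hn : 1 ≤ n) :
    xA (n+1) (n-1) = ∑ m : Fin (n+1), MonoidAlgebra.single (cyc n m) (1:ℚ) := by
  rw [xA]
  refine (Finset.sum_bij (fun m _ => cyc n m) ?_ ?_ ?_ ?_).symm
  · intro m _
    simp only [Finset.mem_filter, Finset.mem_univ, true_and]
    exact cyc_mem n hn m
  · intro m _ m' _ h
    have := congrArg (fun σ : Equiv.Perm (Fin (n+1)) => σ (Fin.last n)) h
    simpa [cyc_last] using this
  · intro w hw
    simp only [Finset.mem_filter, Finset.mem_univ, true_and] at hw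
    exact ⟨w (Fin.last n), Finset.mem_univ _, (eq_cyc n hn w hw).symm⟩
  · intro m _
    rfl

def wv (n : ℕ) (w : Equiv.Perm (Fin (n+1))) (i : ℕ) : ℕ :=
  (w ⟨min i n, by omega⟩ : ℕ)

lemma wv_coe (n : ℕ) (w : Equiv.Perm (Fin (n+1))) (x : Fin (n+1)) :
    wv n w (x : ℕ) = (w x : ℕ) := by
  unfold wv
  congr
  exact min_eq_left (Nat.lt_succ_iff.mp x.isLt)

lemma wv_last (n : ℕ) (w : Equiv.Perm (Fin (n+1))) :
    wv n w n = (w (Fin.last n) : ℕ) := by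
  unfold wv
  congr <;> simp [Fin.last]

def Pmu (n j : ℕ) (w : Equiv.Perm (Fin (n+1))) (i : ℕ) : Prop :=
  i = j ∨ (i < j ∧ wv n w n < wv n w i)

instance (n j : ℕ) (w : Equiv.Perm (Fin (n+1))) : DecidablePred (Pmu n j w) := by
  intro i; unfold Pmu; infer_instance

def mu (n j : ℕ) (w : Equiv.Perm (Fin (n+1))) : ℕ :=
  Nat.find (⟨j, Or.inl rfl⟩ : ∃ i, Pmu n j w i)

lemma mu_le (n j : ℕ) (w : Equiv.Perm (Fin (n+1))) : mu n j w ≤ j :=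
  Nat.find_min' _ (Or.inl rfl)

lemma mu_spec (n j : ℕ) (w : Equiv.Perm (Fin (n+1))) : Pmu n j w (mu n j w) :=
  Nat.find_spec _

lemma mu_min (n j : ℕ) (w : Equiv.Perm (Fin (n+1))) : ∀ i < mu n j w, ¬ Pmu n j w i :=
  fun i h => Nat.find_min _ h

def muF (n j : ℕ) (hjn : j ≤ n) (w : Equiv.Perm (Fin (n+1))) : Fin (n+1) :=
  ⟨mu n j w, by have := mu_le n j w; omega⟩

lemma cyc_coe_of_ne (n : ℕ) (m : Fin (n+1)) (a : Fin (n+1)) (ha : (a:ℕ) ≠ n) :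
    ((cyc n m a : Fin (n+1)) : ℕ) = if (a:ℕ) < (m:ℕ) then (a:ℕ) else (a:ℕ)+1 := by
  rw [cyc_apply, if_neg ha]

lemma forward_mem (n j : ℕ) (hj1 : 1 ≤ j) (hjn : j ≤ n)
    (u : Equiv.Perm (Fin (n+1))) (hu : Acond (n+1) j u)
    (m : Fin (n+1)) (hm : (m:ℕ) ≤ j) : Acond (n+1) (j-1) (u * cyc n m) := by
  intro a b hab hb
  have hab' := Fin.lt_def.mp hab
  have hca := cyc_coe_of_ne n m a (by omega)
  have hcb := cyc_coe_of_ne n m b (by omega)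
  rw [Equiv.Perm.mul_apply, Equiv.Perm.mul_apply]
  exact hu _ _ (Fin.lt_def.mpr (by split_ifs at hca hcb <;> omega))
    (by split_ifs at hcb <;> omega)

lemma mu_eq (n j : ℕ) (hj1 : 1 ≤ j) (hjn : j ≤ n)
    (u : Equiv.Perm (Fin (n+1))) (hu : Acond (n+1) j u)
    (m : Fin (n+1)) (hm : (m:ℕ) ≤ j) : mu n j (u * cyc n m) = (m:ℕ) := by
  rw [mu, Nat.find_eq_iff]
  have hT : wv n (u * cyc n m) n = (u m : ℕ) := by
    rw [wv_last, Equiv.Perm.mul_apply, cyc_last]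
  constructor
  · -- Pmu holds at m
    by_cases hmj : (m:ℕ) = j
    · exact Or.inl hmj
    · refine Or.inr ⟨by omega, ?_⟩
      rw [hT, wv_coe, Equiv.Perm.mul_apply]
      have hcm : ((cyc n m m : Fin (n+1)) : ℕ) = (m:ℕ)+1 := by
        rw [cyc_coe_of_ne n m m (by omega), if_neg (lt_irrefl _)]
      refine hu m (cyc n m m) (Fin.lt_def.mpr (by omega)) (by omega)
  · -- Pmu fails below m
    intro i hi hP
    rcases hP with h | ⟨hij, hlt⟩
    · omega
    · -- wv at i is u i, which is < u m
      have hin : i < n + 1 := by omega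
      have hc : ((cyc n m ⟨i, hin⟩ : Fin (n+1)) : ℕ) = i := by
        rw [cyc_coe_of_ne n m ⟨i, hin⟩ (by simp; omega), if_pos (by simp; omega)]
      have hwv : wv n (u * cyc n m) i = (u (cyc n m ⟨i, hin⟩) : ℕ) :=
        wv_coe n (u * cyc n m) ⟨i, hin⟩
      rw [hT, hwv] at hlt
      have : u (cyc n m ⟨i, hin⟩) < u m :=
        hu _ _ (Fin.lt_def.mpr (by omega)) hm
      rw [Fin.lt_def] at this
      omega

lemma backward_mem (n j : ℕ) (hj1 : 1 ≤ j) (hjn : j ≤ n)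
    (w : Equiv.Perm (Fin (n+1))) (hw : Acond (n+1) (j-1) w) :
    Acond (n+1) j (w * (cyc n (muF n j hjn w))⁻¹) := by
  set M : ℕ := mu n j w with hMdef
  have hMle : M ≤ j := mu_le n j w
  have hWmono : ∀ x y : Fin (n+1), (x:ℕ) < (y:ℕ) → (y:ℕ) ≤ j-1 → (w x : ℕ) < (w y : ℕ) :=
    fun x y h1 h2 => Fin.lt_def.mp (hw x y (Fin.lt_def.mpr h1) h2)
  set T : ℕ := (w (Fin.last n) : ℕ) with hTdef
  have hT1 : ∀ x : Fin (n+1), (x:ℕ) < M → (w x : ℕ) < T := by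
    intro x hx
    have hnP := mu_min n j w (x:ℕ) hx
    unfold Pmu at hnP
    rw [wv_last, wv_coe, ← hTdef] at hnP
    push_neg at hnP
    have hxj : (x:ℕ) < j := by omega
    have := hnP.2 hxj
    -- w x ≤ T, and ≠ since x ≠ last
    have hne : (w x : ℕ) ≠ T := by
      intro h
      have := w.injective (Fin.ext (h.trans hTdef.symm ▸ rfl : (w x : ℕ) = (w (Fin.last n) : ℕ)))
      have := congrArg Fin.val this
      simp [Fin.last] at this
      omega
    omega
  have hT2 : ∀ x : Fin (n+1), M ≤ (x:ℕ) → (x:ℕ) ≤ j-1 → T < (w x : ℕ) := by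
    intro x hx1 hx2
    have hMj : M < j := by omega
    have hP := mu_spec n j w
    unfold Pmu at hP
    rw [wv_last, ← hTdef] at hP
    rcases hP with h | ⟨_, h⟩
    · omega
    · -- T < wv M = w ⟨M⟩ ≤ w x
      have hMn : M < n + 1 := by omega
      have : wv n w M = (w ⟨M, hMn⟩ : ℕ) := wv_coe n w ⟨M, hMn⟩
      rw [this] at h
      by_cases hMx : M = (x:ℕ)
      · have : (⟨M, hMn⟩ : Fin (n+1)) = x := Fin.ext hMx
        rw [this] at h
        exact h
      · exact h.trans (hWmono ⟨M, hMn⟩ x (show M < (x:ℕ) by omega) hx2)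
  intro a b hab hb
  have hab' := Fin.lt_def.mp hab
  have ha := a.isLt; have hbb := b.isLt
  rw [Equiv.Perm.mul_apply, Equiv.Perm.mul_apply, Fin.lt_def]
  have hva := cyc_inv_apply n (muF n j hjn w) a
  have hvb := cyc_inv_apply n (muF n j hjn w) b
  have hMF : ((muF n j hjn w : Fin (n+1)) : ℕ) = M := rfl
  rw [hMF] at hva hvb
  set α : Fin (n+1) := (cyc n (muF n j hjn w))⁻¹ a with hα
  set β : Fin (n+1) := (cyc n (muF n j hjn w))⁻¹ b with hβ
  -- case analysis
  by_cases hbM : (b:ℕ) < M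
  · -- a < b < M : α = a, β = b values
    rw [if_pos (by omega : (a:ℕ) < M)] at hva
    rw [if_pos hbM] at hvb
    exact hWmono α β (by omega) (by omega)
  · by_cases hbM2 : (b:ℕ) = M
    · -- β = last, goal w α < T
      rw [if_pos (by omega : (a:ℕ) < M)] at hva
      have hβlast : β = Fin.last n := by
        apply Fin.ext
        rw [hvb, if_neg hbM, if_pos hbM2]
        simp [Fin.last]
      rw [hβlast]
      exact hT1 α (by omega)
    · -- b > M : β = b - 1 ∈ [M, j-1]
      rw [if_neg hbM, if_neg hbM2] at hvb
      by_cases haM : (a:ℕ) < M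
      · rw [if_pos haM] at hva
        exact (hT1 α (by omega)).trans (hT2 β (by omega) (by omega))
      · by_cases haM2 : (a:ℕ) = M
        · have hαlast : α = Fin.last n := by
            apply Fin.ext
            rw [hva, if_neg haM, if_pos haM2]
            simp [Fin.last]
          rw [hαlast]
          exact hT2 β (by omega) (by omega)
        · rw [if_neg haM, if_neg haM2] at hva
          exact hWmono α β (by omega) (by omega)

lemma cyc_fix (n : ℕ) (m a : Fin (n+1)) (h1 : (a:ℕ) < (m:ℕ)) (h2 : (a:ℕ) ≠ n) :
    cyc n m a = a :=
  Fin.ext (by rw [cyc_coe_of_ne n m a h2, if_pos h1])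

lemma cyc_inv_fix (n : ℕ) (m a : Fin (n+1)) (h1 : (a:ℕ) < (m:ℕ)) :
    (cyc n m)⁻¹ a = a :=
  Fin.ext (by rw [cyc_inv_apply, if_pos h1])

lemma card_filter_gt (n j : ℕ) (hjn : j ≤ n) :
    (Finset.univ.filter (fun m : Fin (n+1) => ¬ (m:ℕ) ≤ j)).card = n - j := by
  have h1 : Finset.univ.filter (fun m : Fin (n+1) => (m:ℕ) ≤ j)
      = Finset.Iic (⟨j, by omega⟩ : Fin (n+1)) := by
    ext x
    simp [Fin.le_def]
  rw [Finset.filter_not, Finset.card_sdiff_of_subset (Finset.filter_subset _ _), h1, Fin.card_Iic]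
  simp only [Finset.card_univ, Fintype.card_fin]
  omega

lemma shift_sum (n j : ℕ) (hj1 : 1 ≤ j) (hjn : j ≤ n) (m : Fin (n+1)) (hm : j < (m:ℕ)) :
    ∑ u ∈ Finset.univ.filter (Acond (n+1) j), MonoidAlgebra.single (u * cyc n m) (1:ℚ)
      = ∑ u ∈ Finset.univ.filter (Acond (n+1) j), MonoidAlgebra.single u (1:ℚ) := by
  have hmn : (m:ℕ) ≤ n := by have := m.isLt; omega
  have hfix : ∀ u : Equiv.Perm (Fin (n+1)), Acond (n+1) j u ↔ Acond (n+1) j (u * cyc n m) := by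
    intro u
    have hval : ∀ a : Fin (n+1), (a:ℕ) ≤ j → (u * cyc n m) a = u a := by
      intro a haj
      rw [Equiv.Perm.mul_apply, cyc_fix n m a (by omega) (by omega)]
    constructor
    · intro hu a b hab hb
      rw [hval a (by have := Fin.lt_def.mp hab; omega), hval b hb]
      exact hu a b hab hb
    · intro hu a b hab hb
      have := hu a b hab hb
      rwa [hval a (by have := Fin.lt_def.mp hab; omega), hval b hb] at this
  refine Finset.sum_nbij' (fun u => u * cyc n m) (fun u => u * (cyc n m)⁻¹) ?_ ?_ ?_ ?_ ?_
  · intro u hu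
    simp only [Finset.mem_filter, Finset.mem_univ, true_and] at hu ⊢
    exact (hfix u).mp hu
  · intro u hu
    simp only [Finset.mem_filter, Finset.mem_univ, true_and] at hu ⊢
    have := (hfix (u * (cyc n m)⁻¹)).mpr
    rw [inv_mul_cancel_right] at this
    exact this hu
  · intro u _; show u * cyc n m * (cyc n m)⁻¹ = u; rw [mul_inv_cancel_right]
  · intro u _; show u * (cyc n m)⁻¹ * cyc n m = u; rw [inv_mul_cancel_right]
  · intro u _; rfl

lemma part1 (n j : ℕ) (hj1 : 1 ≤ j) (hjn : j ≤ n) :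
    ∑ p ∈ (Finset.univ.filter (Acond (n+1) j))
        ×ˢ (Finset.univ.filter (fun m : Fin (n+1) => (m:ℕ) ≤ j)),
      MonoidAlgebra.single (p.1 * cyc n p.2) (1:ℚ)
    = ∑ w ∈ Finset.univ.filter (Acond (n+1) (j-1)), MonoidAlgebra.single w (1:ℚ) := by
  refine Finset.sum_nbij' (fun p => p.1 * cyc n p.2)
    (fun w => (w * (cyc n (muF n j hjn w))⁻¹, muF n j hjn w)) ?_ ?_ ?_ ?_ ?_
  · intro p hp
    simp only [Finset.mem_product, Finset.mem_filter, Finset.mem_univ, true_and] at hp ⊢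
    exact forward_mem n j hj1 hjn p.1 hp.1 p.2 hp.2
  · intro w hw
    simp only [Finset.mem_product, Finset.mem_filter, Finset.mem_univ, true_and] at hw ⊢
    exact ⟨backward_mem n j hj1 hjn w hw, mu_le n j w⟩
  · intro p hp
    simp only [Finset.mem_product, Finset.mem_filter, Finset.mem_univ, true_and] at hp
    obtain ⟨u, m⟩ := p
    have h2 : muF n j hjn (u * cyc n m) = m :=
      Fin.ext (mu_eq n j hj1 hjn u hp.1 m hp.2)
    show (u * cyc n m * (cyc n (muF n j hjn (u * cyc n m)))⁻¹, muF n j hjn (u * cyc n m))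
      = (u, m)
    rw [h2, mul_inv_cancel_right]
  · intro w _
    show w * (cyc n (muF n j hjn w))⁻¹ * cyc n (muF n j hjn w) = w
    rw [inv_mul_cancel_right]
  · intro p _
    rfl

lemma key (n j : ℕ) (hj1 : 1 ≤ j) (hjn : j ≤ n) :
    xA (n+1) j * xA (n+1) (n-1) = xA (n+1) (j-1) + (n - j) • xA (n+1) j := by
  have hn : 1 ≤ n := hj1.trans hjn
  rw [xA_nsub1 n hn]
  rw [show xA (n+1) j = ∑ u ∈ Finset.univ.filter (Acond (n+1) j),
      MonoidAlgebra.single u (1:ℚ) from rfl]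
  rw [Finset.sum_mul_sum]
  simp_rw [MonoidAlgebra.single_mul_single, one_mul]
  have hsplit : ∀ u : Equiv.Perm (Fin (n+1)),
      (∑ m : Fin (n+1), MonoidAlgebra.single (u * cyc n m) (1:ℚ))
      = (∑ m ∈ Finset.univ.filter (fun m : Fin (n+1) => (m:ℕ) ≤ j),
          MonoidAlgebra.single (u * cyc n m) (1:ℚ))
        + ∑ m ∈ Finset.univ.filter (fun m : Fin (n+1) => ¬ (m:ℕ) ≤ j),
          MonoidAlgebra.single (u * cyc n m) (1:ℚ) :=
    fun u => (Finset.sum_filter_add_sum_filter_not _ _ _).symm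
  rw [Finset.sum_congr rfl (fun u _ => hsplit u), Finset.sum_add_distrib]
  congr 1
  · -- first piece = xA (j-1)
    rw [← Finset.sum_product']
    rw [show xA (n+1) (j-1) = ∑ w ∈ Finset.univ.filter (Acond (n+1) (j-1)),
        MonoidAlgebra.single w (1:ℚ) from rfl]
    exact part1 n j hj1 hjn
  · -- second piece = (n-j) • xA j
    rw [Finset.sum_comm]
    have : ∀ m ∈ Finset.univ.filter (fun m : Fin (n+1) => ¬ (m:ℕ) ≤ j),
        (∑ u ∈ Finset.univ.filter (Acond (n+1) j),
          MonoidAlgebra.single (u * cyc n m) (1:ℚ)) = xA (n+1) j := by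
      intro m hm
      simp only [Finset.mem_filter, Finset.mem_univ, true_and, not_le] at hm
      rw [shift_sum n j hj1 hjn m hm]
      rfl
    rw [Finset.sum_congr rfl this, Finset.sum_const, card_filter_gt n j hjn]
    rfl

lemma xA_top (n : ℕ) : xA (n+1) n = 1 := by
  rw [show xA (n+1) n = ∑ w ∈ Finset.univ.filter (Acond (n+1) n),
      MonoidAlgebra.single w (1:ℚ) from rfl]
  have hset : Finset.univ.filter (Acond (n+1) n) = {1} := by
    ext w
    simp only [Finset.mem_filter, Finset.mem_univ, true_and, Finset.mem_singleton]
    constructor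
    · intro hw
      have hinv : Acond (n+1) n w⁻¹ := by
        intro x y h _
        rcases lt_trichotomy (w⁻¹ x) (w⁻¹ y) with h1|h1|h1
        · exact h1
        · exfalso
          have := congrArg w h1
          simp only [Equiv.Perm.coe_inv, Equiv.apply_symm_apply] at this
          exact absurd (this ▸ h) (lt_irrefl _)
        · exfalso
          have h2 := hw _ _ h1 (by have := (w⁻¹ x).isLt; omega)
          simp only [Equiv.Perm.coe_inv, Equiv.apply_symm_apply] at h2
          exact absurd h (lt_asymm h2)
      apply Equiv.ext
      intro i
      apply Fin.ext
      have h1 := le_apply' w hw i (by have := i.isLt; omega)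
      have h2 := le_apply' w⁻¹ hinv (w i) (by have := (w i).isLt; omega)
      have h3 : w⁻¹ (w i) = i := w.symm_apply_apply i
      rw [h3] at h2
      have : ((1 : Equiv.Perm (Fin (n+1))) i : ℕ) = (i : ℕ) := rfl
      omega
    · rintro rfl
      intro a b h _
      simpa using h
  rw [hset, Finset.sum_singleton]
  exact (MonoidAlgebra.one_def).symm

lemma xA_ff (n k : ℕ) (hn : 1 ≤ n) (hk : k ≤ n) :
    xA (n + 1) (n - k) =
      ((List.range k).map
        (fun i : ℕ => xA (n + 1) (n - 1)
          - ((i : ℕ) : MonoidAlgebra ℚ (Equiv.Perm (Fin (n + 1)))))).prod := by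
  induction k with
  | zero => simpa using xA_top n
  | succ k IH =>
    have hk' : k ≤ n := by omega
    rw [List.range_succ, List.map_append, List.prod_append, ← IH hk']
    simp only [List.map_cons, List.map_nil, List.prod_cons, List.prod_nil, mul_one]
    have hkey := key n (n-k) (by omega) (by omega)
    have hjj : n - k - 1 = n - (k+1) := by omega
    have hnj : n - (n - k) = k := by omega
    rw [hjj, hnj] at hkey
    have hc : xA (n+1) (n-k) * ((k : ℕ) : MonoidAlgebra ℚ (Equiv.Perm (Fin (n+1))))
        = k • xA (n+1) (n-k) := by
      rw [← (Nat.cast_commute (k:ℕ) (xA (n+1) (n-k))).eq, nsmul_eq_mul]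
    rw [mul_sub, hkey, hc, add_sub_cancel_right]

/-- In `ℚ[S_{n+1}]`, for `0 ≤ k ≤ n`: `x_{n-k} = ∏_{i=0}^{k-1} (x_{n-1} - i)`,
the falling factorial of `x_{n-1}`, where the integer `i` is identified with
`i` times the identity of the group algebra.  (The product is taken as an ordered
list product since the group algebra is noncommutative, but all factors commute.) -/
theorem xA_eq_fallingFactorial (n k : ℕ) (hn : 1 ≤ n) (hk : k ≤ n) :
    xA (n + 1) (n - k) =
      ((List.range k).map
        (fun i => xA (n + 1) (n - 1)
          - (i : MonoidAlgebra ℚ (Equiv.Perm (Fin (n + 1)))))).prod := by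
  rw [xA_ff n k hn hk]
  congr 1
  induction (List.range k) with
  | nil => simp
  | cons a l ih => simp [ih]
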